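/- There exists a universal constant c > 0 such that for all integers d, t ≥ 1 and Δ ≥ 1, every matrix D ∈ ℤ^{d×t} with all entries of absolute value at most Δ and every g ∈ 𝒢(D) satisfy ‖g‖_1 ≤ (c·d·Δ)^d. -/

import Mathlib

set_option linter.unusedSectionVars false

open Finset

namespace GraverAux

variable {ι : Type*} [Fintype ι] [DecidableEq ι] {d : ℕ}

lemma exists_dep (v : ι → Fin d → ℚ) (F : Finset ι) (hF : d + 2 ≤ F.card) :
    ∃ c : ι → ℚ, (∀ i ∉ F, c i = 0) ∧ (∃ i, c i ≠ 0) ∧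
      ∑ i, c i = 0 ∧ ∀ r, ∑ i, c i * v i r = 0 := by
  classical
  have hfr : Module.finrank ℚ (ℚ × (Fin d → ℚ)) = 1 + d := by
    simp [Module.finrank_prod]
  have hnotli : ¬ LinearIndependent ℚ
      (fun i : F => ((1 : ℚ), v (i : ι)) : F → ℚ × (Fin d → ℚ)) := by
    intro h
    have := h.fintype_card_le_finrank
    rw [Fintype.card_coe, hfr] at this
    omega
  obtain ⟨gg, hsum, i0, hi0⟩ := Fintype.not_linearIndependent_iff.mp hnotli
  set c : ι → ℚ := fun i => if h : i ∈ F then gg ⟨i, h⟩ else 0 with hc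
  have key : ∀ f : ι → ℚ, ∑ i, c i * f i = ∑ x : {x // x ∈ F}, gg x * f (x : ι) := by
    intro f
    rw [← Finset.sum_subset (Finset.subset_univ F)
      (fun i _ hi => by rw [hc]; simp only; rw [dif_neg hi, zero_mul])]
    rw [Finset.univ_eq_attach, ← Finset.sum_attach F (fun i => c i * f i)]
    exact Finset.sum_congr rfl fun x _ => by rw [hc]; simp only; rw [dif_pos x.2]
  refine ⟨c, fun i hi => dif_neg hi, ⟨i0, by simp only [hc, dif_pos i0.2]; exact hi0⟩, ?_, ?_⟩
  · have h1 := congrArg Prod.fst hsum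
    simp only [Prod.fst_sum, Prod.smul_fst, smul_eq_mul, mul_one, Prod.fst_zero] at h1
    have := key (fun _ => 1)
    rw [Finset.univ_eq_attach] at h1
    simpa [h1] using this
  · intro r
    have h2 := congrArg Prod.snd hsum
    simp only [Prod.snd_sum, Prod.smul_snd, Prod.snd_zero] at h2
    have h3 := congrFun h2 r
    simp only [Finset.sum_apply, Pi.smul_apply, smul_eq_mul, Pi.zero_apply] at h3
    rw [key (fun i => v i r), h3]


lemma reduce_frac (v : ι → Fin d → ℚ) (A : Finset ι) :
    ∀ n : ℕ, ∀ μ : ι → ℚ, (A.filter (fun i => μ i ≠ 0 ∧ μ i ≠ 1)).card ≤ n →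
    (∀ i ∉ A, μ i = 0) → (∀ i, 0 ≤ μ i ∧ μ i ≤ 1) →
    ∃ μ' : ι → ℚ, (∀ i ∉ A, μ' i = 0) ∧ (∀ i, 0 ≤ μ' i ∧ μ' i ≤ 1) ∧
      ∑ i, μ' i = ∑ i, μ i ∧ (∀ r, ∑ i, μ' i * v i r = ∑ i, μ i * v i r) ∧
      (A.filter (fun i => μ' i ≠ 0 ∧ μ' i ≠ 1)).card ≤ d + 1 := by
  classical
  intro n
  induction n with
  | zero =>
    intro μ hcard hsupp hbd
    exact ⟨μ, hsupp, hbd, rfl, fun _ => rfl, le_trans hcard (by omega)⟩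
  | succ n ih =>
    intro μ hcard hsupp hbd
    by_cases hle : (A.filter (fun i => μ i ≠ 0 ∧ μ i ≠ 1)).card ≤ d + 1
    · exact ⟨μ, hsupp, hbd, rfl, fun _ => rfl, hle⟩
    push_neg at hle
    set F := A.filter (fun i => μ i ≠ 0 ∧ μ i ≠ 1) with hFdef
    obtain ⟨c, hcsupp, ⟨j0, hj0⟩, hcsum, hcv⟩ := exists_dep v F (by omega)
    have hcF : ∀ i, c i ≠ 0 → i ∈ F := fun i h => by_contra fun hn => h (hcsupp _ hn)
    set F' := F.filter (fun i => c i ≠ 0) with hF'def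
    have hF'ne : F'.Nonempty := ⟨j0, Finset.mem_filter.mpr ⟨hcF _ hj0, hj0⟩⟩
    have hfrac : ∀ i ∈ F, 0 < μ i ∧ μ i < 1 := by
      intro i hi
      rw [hFdef, Finset.mem_filter] at hi
      exact ⟨lt_of_le_of_ne (hbd i).1 (Ne.symm hi.2.1), lt_of_le_of_ne (hbd i).2 hi.2.2⟩
    set step : ι → ℚ := fun i => if 0 < c i then (1 - μ i) / c i else μ i / (-c i) with hstepdef
    have hsteppos : ∀ i ∈ F', 0 < step i := by
      intro i hi
      rw [hF'def, Finset.mem_filter] at hi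
      obtain ⟨hμ1, hμ2⟩ := hfrac i hi.1
      rw [hstepdef]
      rcases lt_or_gt_of_ne hi.2 with h | h
      · simp only [if_neg (not_lt.mpr h.le)]
        exact div_pos hμ1 (by linarith)
      · simp only [if_pos h]
        exact div_pos (by linarith) h
    obtain ⟨is, hismem, hismin⟩ := F'.exists_min_image step hF'ne
    set ε := step is with hεdef
    have hεpos : 0 < ε := hsteppos is hismem
    have hcis : c is ≠ 0 := (Finset.mem_filter.mp hismem).2
    have hisF : is ∈ F := (Finset.mem_filter.mp hismem).1
    set μ' : ι → ℚ := fun i => μ i + ε * c i with hμ'def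
    have hsame : ∀ i, c i = 0 → μ' i = μ i := fun i h => by
      rw [hμ'def]; simp [h]
    have hub : ∀ i, c i ≠ 0 → (0 < c i → ε ≤ (1 - μ i) / c i) ∧ (c i < 0 → ε ≤ μ i / (-c i)) := by
      intro i h
      have hi' : i ∈ F' := Finset.mem_filter.mpr ⟨hcF _ h, h⟩
      have := hismin i hi'
      constructor
      · intro hpos; rw [hstepdef] at this; simpa [if_pos hpos] using this
      · intro hneg; rw [hstepdef] at this; simpa [if_neg (not_lt.mpr hneg.le)] using this
    have hbd' : ∀ i, 0 ≤ μ' i ∧ μ' i ≤ 1 := by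
      intro i
      rcases lt_trichotomy (c i) 0 with h | h | h
      · have h2 := (hub i h.ne).2 h
        have h3 : ε * (-c i) ≤ μ i := by
          rw [div_eq_mul_inv] at h2
          calc ε * (-c i) ≤ (μ i * (-c i)⁻¹) * (-c i) := by
                apply mul_le_mul_of_nonneg_right h2 (by linarith)
            _ = μ i := by field_simp [h.ne]
        constructor
        · rw [hμ'def]; simp only; nlinarith
        · rw [hμ'def]; simp only; nlinarith [(hbd i).2, mul_pos hεpos (neg_pos.mpr h)]
      · rw [hsame i h]; exact hbd i
      · have h2 := (hub i h.ne').1 h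
        have h3 : ε * c i ≤ 1 - μ i := by
          rw [div_eq_mul_inv] at h2
          calc ε * c i ≤ ((1 - μ i) * (c i)⁻¹) * c i := by
                apply mul_le_mul_of_nonneg_right h2 h.le
            _ = 1 - μ i := by field_simp
        constructor
        · rw [hμ'def]; simp only; nlinarith [(hbd i).1, mul_pos hεpos h]
        · rw [hμ'def]; simp only; linarith
    have hsupp' : ∀ i ∉ A, μ' i = 0 := by
      intro i hi
      have : i ∉ F := fun hF2 => hi (Finset.mem_of_mem_filter i (hFdef ▸ hF2))
      rw [hsame i (hcsupp i this)]; exact hsupp i hi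
    have hsum' : ∑ i, μ' i = ∑ i, μ i := by
      rw [hμ'def]; simp only
      rw [Finset.sum_add_distrib, ← Finset.mul_sum, hcsum, mul_zero, add_zero]
    have hv' : ∀ r, ∑ i, μ' i * v i r = ∑ i, μ i * v i r := by
      intro r
      rw [hμ'def]; simp only [add_mul]
      rw [Finset.sum_add_distrib]
      have : ∑ i, ε * c i * v i r = ε * ∑ i, c i * v i r := by
        rw [Finset.mul_sum]; exact Finset.sum_congr rfl fun i _ => by ring
      rw [this, hcv r, mul_zero, add_zero]
    -- the minimizer becomes integral
    have histight : μ' is = 0 ∨ μ' is = 1 := by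
      rcases lt_or_gt_of_ne hcis with h | h
      · left
        rw [hμ'def]; simp only
        rw [hεdef, hstepdef]; simp only [if_neg (not_lt.mpr h.le)]
        field_simp [h.ne]
        ring
      · right
        rw [hμ'def]; simp only
        rw [hεdef, hstepdef]; simp only [if_pos h]
        field_simp [h.ne']
        ring
    have hsubset : A.filter (fun i => μ' i ≠ 0 ∧ μ' i ≠ 1) ⊆ F.erase is := by
      intro i hi
      rw [Finset.mem_filter] at hi
      refine Finset.mem_erase.mpr ⟨?_, ?_⟩
      · rintro rfl
        rcases histight with h | h
        · exact hi.2.1 h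
        · exact hi.2.2 h
      · by_contra hn
        have hc0 : c i = 0 := hcsupp i hn
        rw [hsame i hc0] at hi
        have : i ∈ F := hFdef ▸ Finset.mem_filter.mpr ⟨hi.1, hi.2⟩
        exact hn this
    have hcard' : (A.filter (fun i => μ' i ≠ 0 ∧ μ' i ≠ 1)).card ≤ n := by
      have h1 := Finset.card_le_card hsubset
      rw [Finset.card_erase_of_mem hisF] at h1
      omega
    obtain ⟨μ'', h1, h2, h3, h4, h5⟩ := ih μ' hcard' hsupp' hbd'
    exact ⟨μ'', h1, h2, h3.trans hsum', fun r => (h4 r).trans (hv' r), h5⟩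


/-- `Good v A lam`: the fractional certificate. -/
def Good (v : ι → Fin d → ℚ) (A : Finset ι) (lam : ι → ℚ) : Prop :=
  (∀ i ∉ A, lam i = 0) ∧ (∀ i, 0 ≤ lam i ∧ lam i ≤ 1) ∧
    ∑ i, lam i = (A.card : ℚ) - d ∧ ∀ r, ∑ i, lam i * v i r = 0

lemma drop_one (v : ι → Fin d → ℚ) (A : Finset ι) (hA : d + 1 ≤ A.card)
    (lam : ι → ℚ) (hg : Good v A lam) :
    ∃ i₀ ∈ A, ∃ lam' : ι → ℚ, Good v (A.erase i₀) lam' := by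
  classical
  obtain ⟨hsupp, hbd, hsum, hv⟩ := hg
  set k := A.card with hk
  have hkd : (0:ℚ) < (k:ℚ) - d := by
    have : (d:ℚ) + 1 ≤ (k:ℚ) := by exact_mod_cast hA
    linarith
  set α : ℚ := ((k:ℚ) - 1 - d) / ((k:ℚ) - d) with hα
  have hα0 : 0 ≤ α := by
    apply div_nonneg _ hkd.le
    have : (d:ℚ) + 1 ≤ (k:ℚ) := by exact_mod_cast hA
    linarith
  have hα1 : α ≤ 1 := by
    rw [hα, div_le_one hkd]; linarith
  set μ : ι → ℚ := fun i => α * lam i with hμ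
  have hμsupp : ∀ i ∉ A, μ i = 0 := fun i hi => by rw [hμ]; simp [hsupp i hi]
  have hμbd : ∀ i, 0 ≤ μ i ∧ μ i ≤ 1 := by
    intro i
    constructor
    · exact mul_nonneg hα0 (hbd i).1
    · show α * lam i ≤ 1
      nlinarith [(hbd i).1, (hbd i).2, hα0, hα1]
  have hμsum : ∑ i, μ i = (k:ℚ) - 1 - d := by
    rw [hμ]; simp only
    rw [← Finset.mul_sum, hsum, hα, div_mul_cancel₀ _ hkd.ne']
  have hμv : ∀ r, ∑ i, μ i * v i r = 0 := by
    intro r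
    rw [hμ]; simp only [mul_assoc]
    rw [← Finset.mul_sum, hv r, mul_zero]
  obtain ⟨μ', h1, h2, h3, h4, h5⟩ :=
    reduce_frac v A (A.filter (fun i => μ i ≠ 0 ∧ μ i ≠ 1)).card μ le_rfl hμsupp hμbd
  rw [hμsum] at h3
  -- find a zero coordinate inside A
  have hzero : ∃ i₀ ∈ A, μ' i₀ = 0 := by
    by_contra hno
    push_neg at hno
    set F := A.filter (fun i => μ' i ≠ 0 ∧ μ' i ≠ 1) with hFdef
    set O := A.filter (fun i => μ' i = 1) with hOdef
    have Feq : A.filter (fun i => ¬ μ' i = 1) = F := by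
      rw [hFdef]
      apply Finset.filter_congr
      intro i hi
      constructor
      · exact fun h => ⟨hno i hi, h⟩
      · exact fun h => h.2
    have hsplit : ∑ i ∈ O, μ' i + ∑ i ∈ F, μ' i = ∑ i ∈ A, μ' i := by
      rw [← Feq]
      exact Finset.sum_filter_add_sum_filter_not A _ μ'
    have hAsum : ∑ i ∈ A, μ' i = (k:ℚ) - 1 - d := by
      rw [← h3]
      rw [Finset.sum_subset (Finset.subset_univ A) (fun i _ hi => h1 i hi)]
    have hOsum : ∑ i ∈ O, μ' i = (O.card : ℚ) := by
      rw [Finset.sum_congr rfl (fun i hi => (Finset.mem_filter.mp hi).2)]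
      simp
      rfl
    have hcardOF : O.card + F.card = k := by
      rw [← Feq, hk]
      exact Finset.card_filter_add_card_filter_not _
    have hFsum : ∑ i ∈ F, μ' i = (F.card : ℚ) - (d + 1) := by
      have : (O.card : ℚ) + ∑ i ∈ F, μ' i = (k:ℚ) - 1 - d := by
        rw [← hOsum, hsplit, hAsum]
      have hcast : (O.card : ℚ) = (k:ℚ) - (F.card : ℚ) := by
        have : (O.card : ℚ) + (F.card : ℚ) = (k : ℚ) := by exact_mod_cast hcardOF
        linarith
      linarith
    rcases Finset.eq_empty_or_nonempty F with hFe | hFne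
    · rw [hFe] at hFsum
      simp at hFsum
      have : (0:ℚ) < (d:ℚ) + 1 := by positivity
      -- hFsum : 0 = (F.card:ℚ) - (d+1) with F.card = 0
      have hc : (Finset.card (∅ : Finset ι) : ℚ) = 0 := by simp
      linarith [hFsum]
    · have hpos : 0 < ∑ i ∈ F, μ' i := by
        apply Finset.sum_pos _ hFne
        intro i hi
        rw [hFdef, Finset.mem_filter] at hi
        exact lt_of_le_of_ne (h2 i).1 (Ne.symm hi.2.1)
      have : (d + 1 : ℚ) < (F.card : ℚ) := by linarith
      have : d + 1 < F.card := by exact_mod_cast this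
      omega
  obtain ⟨i₀, hi₀A, hi₀z⟩ := hzero
  refine ⟨i₀, hi₀A, μ', ?_, h2, ?_, fun r => (h4 r).trans (hμv r)⟩
  · intro i hi
    by_cases hii : i = i₀
    · rw [hii]; exact hi₀z
    · apply h1
      intro hiA
      exact hi (Finset.mem_erase.mpr ⟨hii, hiA⟩)
  · rw [h3, Finset.card_erase_of_mem hi₀A, ← hk]
    have hk1 : 1 ≤ k := by omega
    push_cast [hk1]
    ring


lemma bound_of_good (v : ι → Fin d → ℚ) (Δ : ℚ) (hv : ∀ i r, |v i r| ≤ Δ)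
    (A : Finset ι) (lam : ι → ℚ) (hg : Good v A lam) (r : Fin d) :
    |∑ i ∈ A, v i r| ≤ d * Δ := by
  obtain ⟨hsupp, hbd, hsum, hvz⟩ := hg
  have hz : ∑ i ∈ A, lam i * v i r = 0 := by
    rw [Finset.sum_subset (Finset.subset_univ A)
      (fun i _ hi => by rw [hsupp i hi, zero_mul])]
    exact hvz r
  have hlam : ∑ i ∈ A, lam i = (A.card : ℚ) - d := by
    rw [Finset.sum_subset (Finset.subset_univ A) (fun i _ hi => hsupp i hi)]
    exact hsum
  have hdecomp : ∑ i ∈ A, v i r = ∑ i ∈ A, (1 - lam i) * v i r := by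
    rw [← sub_eq_zero, ← Finset.sum_sub_distrib]
    rw [show ∀ (f g : ι → ℚ), (∑ i ∈ A, (f i - g i)) = ∑ i ∈ A, (f i - g i) from fun _ _ => rfl]
    calc ∑ i ∈ A, (v i r - (1 - lam i) * v i r) = ∑ i ∈ A, lam i * v i r := by
          apply Finset.sum_congr rfl; intro i _; ring
      _ = 0 := hz
  rw [hdecomp]
  calc |∑ i ∈ A, (1 - lam i) * v i r| ≤ ∑ i ∈ A, |(1 - lam i) * v i r| :=
        Finset.abs_sum_le_sum_abs _ _
    _ ≤ ∑ i ∈ A, (1 - lam i) * Δ := by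
        apply Finset.sum_le_sum
        intro i _
        rw [abs_mul, abs_of_nonneg (by linarith [(hbd i).2] : (0:ℚ) ≤ 1 - lam i)]
        exact mul_le_mul_of_nonneg_left (hv i r) (by linarith [(hbd i).2])
    _ = ((A.card : ℚ) - ((A.card : ℚ) - d)) * Δ := by
        rw [← Finset.sum_mul, Finset.sum_sub_distrib, Finset.sum_const, hlam, nsmul_eq_mul,
          mul_one]
    _ = d * Δ := by ring
  
lemma bound_of_small (v : ι → Fin d → ℚ) (Δ : ℚ) (hΔ : 0 ≤ Δ) (hv : ∀ i r, |v i r| ≤ Δ)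
    (A : Finset ι) (hA : A.card ≤ d) (r : Fin d) :
    |∑ i ∈ A, v i r| ≤ d * Δ := by
  calc |∑ i ∈ A, v i r| ≤ ∑ i ∈ A, |v i r| := Finset.abs_sum_le_sum_abs _ _
    _ ≤ ∑ _i ∈ A, Δ := Finset.sum_le_sum (fun i _ => hv i r)
    _ = A.card * Δ := by rw [Finset.sum_const, nsmul_eq_mul]
    _ ≤ d * Δ := by
        apply mul_le_mul_of_nonneg_right _ hΔ
        exact_mod_cast hA

lemma chain_exists (v : ι → Fin d → ℚ) (Δ : ℚ) (hΔ : 0 ≤ Δ) (hv : ∀ i r, |v i r| ≤ Δ) :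
    ∀ m : ℕ, ∀ A : Finset ι, A.card = m →
    (A.card ≤ d ∨ ∃ lam : ι → ℚ, Good v A lam) →
    ∃ B : ℕ → Finset ι, B m = A ∧ (∀ k, k < m → B k ⊆ B (k+1)) ∧
      (∀ k ≤ m, (B k).card = k) ∧
      ∀ k ≤ m, ∀ r, |∑ i ∈ B k, v i r| ≤ d * Δ := by
  intro m
  induction m with
  | zero =>
    intro A hcard _
    refine ⟨fun _ => ∅, (Finset.card_eq_zero.mp hcard).symm, fun k hk => by omega, ?_, ?_⟩
    · intro k hk
      simp [Nat.le_zero.mp hk]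
    · intro k hk r
      simp only [Finset.sum_empty, abs_zero]
      positivity
  | succ m ih =>
    intro A hcard hgood
    have hAbound : ∀ r, |∑ i ∈ A, v i r| ≤ d * Δ := by
      rcases hgood with h | ⟨lam, hlam⟩
      · exact fun r => bound_of_small v Δ hΔ hv A h r
      · exact fun r => bound_of_good v Δ hv A lam hlam r
    have hAne : A.Nonempty := Finset.card_pos.mp (by omega)
    -- find i₀ to remove, with the premise for the smaller set
    have hstep : ∃ i₀ ∈ A, ((A.erase i₀).card ≤ d ∨ ∃ lam : ι → ℚ, Good v (A.erase i₀) lam) := by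
      by_cases hm : m + 1 ≤ d
      · obtain ⟨i₀, hi₀⟩ := hAne
        refine ⟨i₀, hi₀, Or.inl ?_⟩
        rw [Finset.card_erase_of_mem hi₀, hcard]
        omega
      · rcases hgood with h | ⟨lam, hlam⟩
        · omega
        · obtain ⟨i₀, hi₀, lam', hlam'⟩ := drop_one v A (by omega) lam hlam
          exact ⟨i₀, hi₀, Or.inr ⟨lam', hlam'⟩⟩
    obtain ⟨i₀, hi₀, hprem⟩ := hstep
    have hcard' : (A.erase i₀).card = m := by
      rw [Finset.card_erase_of_mem hi₀, hcard]
      omega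
    obtain ⟨B', hB'top, hB'mono, hB'card, hB'bd⟩ := ih (A.erase i₀) hcard' hprem
    refine ⟨fun k => if k = m + 1 then A else B' k, ?_, ?_, ?_, ?_⟩
    · simp
    · intro k hk
      by_cases hkm : k + 1 = m + 1
      · have : k = m := by omega
        subst this
        simp only [if_neg (by omega : ¬ k = k + 1), if_pos rfl, hB'top]
        exact Finset.erase_subset _ _
      · simp only [if_neg (by omega : ¬ k = m + 1), if_neg hkm]
        exact hB'mono k (by omega)
    · intro k hk
      by_cases hkm : k = m + 1
      · subst hkm; simp [hcard]
      · simp only [if_neg hkm]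
        exact hB'card k (by omega)
    · intro k hk r
      by_cases hkm : k = m + 1
      · subst hkm; simp only [if_pos rfl]; exact hAbound r
      · simp only [if_neg hkm]
        exact hB'bd k (by omega) r


lemma steinitz_int (w : ι → Fin d → ℤ) (Δ : ℕ)
    (hw : ∀ i r, |w i r| ≤ (Δ:ℤ)) (hsum : ∀ r, ∑ i, w i r = 0) :
    ∃ B : ℕ → Finset ι, (∀ k, k < Fintype.card ι → B k ⊆ B (k+1)) ∧
      (∀ k ≤ Fintype.card ι, (B k).card = k) ∧
      ∀ k ≤ Fintype.card ι, ∀ r, |∑ i ∈ B k, w i r| ≤ (d:ℤ) * Δ := by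
  classical
  set n := Fintype.card ι with hn
  set v : ι → Fin d → ℚ := fun i r => ((w i r : ℤ) : ℚ) with hvdef
  have hv : ∀ i r, |v i r| ≤ (Δ:ℚ) := by
    intro i r
    rw [hvdef]
    simp only
    rw [← Int.cast_abs]
    exact_mod_cast hw i r
  have hvsum : ∀ r, ∑ i, v i r = 0 := by
    intro r
    rw [hvdef]
    simp only
    rw [← Int.cast_sum, hsum r, Int.cast_zero]
  have hprem : (Finset.univ : Finset ι).card ≤ d ∨ ∃ lam, Good v Finset.univ lam := by
    by_cases hnd : n ≤ d
    · left; rw [Finset.card_univ, ← hn]; exact hnd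
    · right
      push_neg at hnd
      have hnpos : (0:ℚ) < (n:ℚ) := by
        have : 0 < n := by omega
        exact_mod_cast this
      refine ⟨fun _ => ((n:ℚ) - d)/n, fun i hi => absurd (Finset.mem_univ i) hi, ?_, ?_, ?_⟩
      · intro i
        constructor
        · apply div_nonneg _ hnpos.le
          have : (d:ℚ) < (n:ℚ) := by exact_mod_cast hnd
          linarith
        · rw [div_le_one hnpos]
          have : (0:ℚ) ≤ (d:ℚ) := by positivity
          linarith
      · rw [Finset.sum_const, Finset.card_univ, ← hn, nsmul_eq_mul]
        field_simp
      · intro r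
        rw [← Finset.mul_sum, hvsum r, mul_zero]
  obtain ⟨B, hBtop, hmono, hcardk, hbd⟩ :=
    chain_exists v (Δ:ℚ) (by positivity) hv n Finset.univ (by rw [Finset.card_univ]) hprem
  refine ⟨B, hmono, hcardk, ?_⟩
  intro k hk r
  have h1 := hbd k hk r
  have h2 : ∑ i ∈ B k, v i r = ((∑ i ∈ B k, w i r : ℤ) : ℚ) := by
    rw [hvdef]; push_cast; rfl
  rw [h2, ← Int.cast_abs] at h1
  have h3 : ((d:ℚ) * (Δ:ℚ)) = (((d:ℤ) * (Δ:ℤ) : ℤ) : ℚ) := by push_cast; ring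
  rw [h3] at h1
  exact_mod_cast h1


lemma chain_mono {ι : Type*} (B : ℕ → Finset ι) (m : ℕ)
    (hmono : ∀ k, k < m → B k ⊆ B (k+1)) :
    ∀ a b, a ≤ b → b ≤ m → B a ⊆ B b := by
  intro a b hab hbm
  induction b with
  | zero => rw [Nat.le_zero.mp hab]
  | succ b ihb =>
    rcases Nat.lt_or_ge a (b+1) with h | h
    · exact (ihb (by omega) (by omega)).trans (hmono b (by omega))
    · rw [Nat.le_antisymm hab h]

lemma sign_mul_self_eq_abs (a : ℤ) : a.sign * a = |a| := by
  rcases lt_trichotomy a 0 with h|h|h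
  · rw [Int.sign_eq_neg_one_of_neg h, abs_of_neg h]; ring
  · simp [h]
  · rw [Int.sign_eq_one_of_pos h, abs_of_pos h]; ring

lemma abs_sign_le_one (a : ℤ) : |a.sign| ≤ 1 := by
  rcases lt_trichotomy a 0 with h|h|h <;>
    simp [Int.sign_eq_one_of_pos, Int.sign_eq_neg_one_of_neg, h]


end GraverAux

/-- The Graver basis of `D ∈ ℤ^{d×t}`: nonzero integer kernel elements of `D`
minimal under the conformal order `⊑` (`x ⊑ y` iff `xᵢyᵢ ≥ 0` and `|xᵢ| ≤ |yᵢ|`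
for all `i`). -/
def Graver {d t : ℕ} (D : Matrix (Fin d) (Fin t) ℤ) : Set (Fin t → ℤ) :=
  {g | g ≠ 0 ∧ D.mulVec g = 0 ∧
    ∀ h : Fin t → ℤ, h ≠ 0 → D.mulVec h = 0 →
      (∀ i, 0 ≤ h i * g i ∧ |h i| ≤ |g i|) → h = g}

/-- There is a universal constant `c > 0` such that for all `d, t ≥ 1` and `Δ ≥ 1`,
every Graver basis element `g` of a matrix `D ∈ ℤ^{d×t}` with entries of absolute
value at most `Δ` satisfies `‖g‖₁ ≤ (c·d·Δ)ᵈ`. -/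
theorem graver_basis_norm_bound :
    ∃ c : ℕ, 0 < c ∧ ∀ d t Δ : ℕ, 1 ≤ d → 1 ≤ t → 1 ≤ Δ →
      ∀ D : Matrix (Fin d) (Fin t) ℤ, (∀ i j, |D i j| ≤ (Δ : ℤ)) →
        ∀ g ∈ Graver D, ∑ i, |g i| ≤ ((c * d * Δ : ℕ) : ℤ) ^ d := by
  classical
  refine ⟨3, by norm_num, ?_⟩
  intro d t Δ hd ht hΔ D hD g hg
  obtain ⟨hg0, hgker, hgmin⟩ := hg
  set N := ∑ i, (g i).natAbs with hN
  have key : N ≤ (2 * d * Δ + 1) ^ d := by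
    by_contra hbig
    push_neg at hbig
    set ι := (Σ i : Fin t, Fin (g i).natAbs) with hι
    have hcardι : Fintype.card ι = N := by
      show Fintype.card (Σ i : Fin t, Fin (g i).natAbs) = N
      simp [Fintype.card_sigma, hN]
    set w : ι → Fin d → ℤ := fun p r => Int.sign (g p.1) * D r p.1 with hw
    have hwbd : ∀ p r, |w p r| ≤ (Δ:ℤ) := by
      intro p r
      rw [hw]
      simp only
      rw [abs_mul]
      calc |Int.sign (g p.1)| * |D r p.1| ≤ 1 * (Δ:ℤ) := by
            apply mul_le_mul (GraverAux.abs_sign_le_one _) (hD r p.1) (abs_nonneg _) zero_le_one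
        _ = (Δ:ℤ) := one_mul _
    have hwsum : ∀ r, ∑ p, w p r = 0 := by
      intro r
      rw [← Finset.univ_sigma_univ, Finset.sum_sigma]
      have h1 : ∀ i : Fin t, ∑ j : Fin (g i).natAbs, w ⟨i, j⟩ r
          = D r i * g i := by
        intro i
        have hconst : ∀ j : Fin (g i).natAbs, w ⟨i, j⟩ r = Int.sign (g i) * D r i :=
          fun j => rfl
        rw [Finset.sum_congr rfl (fun j _ => hconst j), Finset.sum_const, Finset.card_univ,
          Fintype.card_fin, nsmul_eq_mul]
        rw [show ((g i).natAbs : ℤ) * (Int.sign (g i) * D r i)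
            = (Int.sign (g i) * (g i).natAbs) * D r i by ring, Int.sign_mul_natAbs]
        ring
      rw [Finset.sum_congr rfl (fun i _ => h1 i)]
      have := congrFun hgker r
      simpa [Matrix.mulVec, dotProduct] using this
    obtain ⟨B, hmono, hcardk, hbd⟩ := GraverAux.steinitz_int w Δ hwbd hwsum
    rw [hcardι] at hmono hcardk hbd
    have hmono' : ∀ a b : ℕ, a ≤ b → b ≤ N → B a ⊆ B b :=
      GraverAux.chain_mono B N hmono
    -- pigeonhole on prefix sums
    set M : ℤ := (d:ℤ) * Δ with hM
    have hcardIcc : Fintype.card (Fin d → (Finset.Icc (-M) M)) = (2*d*Δ+1)^d := by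
      rw [Fintype.card_fun, Fintype.card_coe, Int.card_Icc, Fintype.card_fin]
      congr 1
      rw [hM]
      have hcast : ((d:ℤ) * Δ + 1 - -((d:ℤ)*Δ)) = ((2*d*Δ+1 : ℕ) : ℤ) := by
        push_cast; ring
      rw [hcast, Int.toNat_natCast]
    have hmem : ∀ k : Fin N, ∀ r, ∑ i ∈ B k, w i r ∈ Finset.Icc (-M) M := by
      intro k r
      rw [Finset.mem_Icc, hM]
      have := abs_le.mp (hbd k (le_of_lt k.isLt) r)
      exact this
    set f : Fin N → (Fin d → (Finset.Icc (-M) M)) :=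
      fun k r => ⟨∑ i ∈ B k, w i r, hmem k r⟩ with hf
    have main : ∀ a b : Fin N, (a:ℕ) < (b:ℕ) → f a = f b → False := by
      intro a b hab hfab
      have hsums : ∀ r, ∑ i ∈ B a, w i r = ∑ i ∈ B b, w i r := by
        intro r
        have h1 := congrFun hfab r
        exact congrArg Subtype.val h1
      have hsub : B (a:ℕ) ⊆ B (b:ℕ) := hmono' a b (le_of_lt hab) (le_of_lt b.isLt)
      set T := B (b:ℕ) \ B (a:ℕ) with hT
      have hTcard : T.card = (b:ℕ) - (a:ℕ) := by
        rw [hT, Finset.card_sdiff_of_subset hsub, hcardk a (le_of_lt a.isLt),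
          hcardk b (le_of_lt b.isLt)]
      have hTsum : ∀ r, ∑ p ∈ T, w p r = 0 := by
        intro r
        rw [hT, Finset.sum_sdiff_eq_sub hsub, hsums r, sub_self]
      set cnt : Fin t → ℕ := fun i => (T.filter (fun p => p.1 = i)).card with hcnt
      set h : Fin t → ℤ := fun i => Int.sign (g i) * (cnt i : ℤ) with hh
      have hcnt_le : ∀ i, cnt i ≤ (g i).natAbs := by
        intro i
        have hle : (T.filter (fun p => p.1 = i)).card ≤ (Finset.range (g i).natAbs).card := by
          apply Finset.card_le_card_of_injOn (fun p : ι => ((p.2 : ℕ)))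
          · intro p hp
            rw [Finset.mem_coe, Finset.mem_filter] at hp
            rw [Finset.mem_coe, Finset.mem_range]
            exact lt_of_lt_of_le p.2.isLt
              (le_of_eq (congrArg (fun j => (g j).natAbs) hp.2))
          · rintro ⟨p1, p2⟩ hp ⟨q1, q2⟩ hq hpq
            rw [Finset.mem_coe, Finset.mem_filter] at hp hq
            obtain ⟨-, hp1⟩ := hp
            obtain ⟨-, hq1⟩ := hq
            dsimp at hp1 hq1 hpq
            subst hp1
            subst hq1
            rw [Sigma.mk.inj_iff]
            exact ⟨rfl, heq_of_eq (Fin.ext hpq)⟩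
        rw [Finset.card_range] at hle
        exact hle
      have hTfib : T.card = ∑ i : Fin t, cnt i :=
        Finset.card_eq_sum_card_fiberwise (fun p _ => Finset.mem_univ p.1)
      -- h is in the kernel
      have hker : D.mulVec h = 0 := by
        funext r
        have hfib : ∑ i : Fin t, ∑ p ∈ T.filter (fun p => p.1 = i), w p r
            = ∑ p ∈ T, w p r :=
          Finset.sum_fiberwise_of_maps_to (fun p _ => Finset.mem_univ p.1) _
        have hinner : ∀ i : Fin t, ∑ p ∈ T.filter (fun p => p.1 = i), w p r
            = (cnt i : ℤ) * (Int.sign (g i) * D r i) := by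
          intro i
          have hc : ∀ p ∈ T.filter (fun p => p.1 = i), w p r = Int.sign (g i) * D r i := by
            intro p hp
            have h1 : p.1 = i := (Finset.mem_filter.mp hp).2
            show Int.sign (g p.1) * D r p.1 = _
            rw [h1]
          rw [Finset.sum_congr rfl hc, Finset.sum_const, nsmul_eq_mul]
        have h0 : ∑ i : Fin t, (cnt i : ℤ) * (Int.sign (g i) * D r i) = 0 := by
          rw [← Finset.sum_congr rfl (fun i _ => hinner i), hfib, hTsum r]
        show ∑ j, D r j * h j = 0
        rw [← h0]
        apply Finset.sum_congr rfl
        intro i _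
        rw [hh]
        ring
      -- h is nonzero
      have hTne : T.Nonempty := by
        apply Finset.card_pos.mp
        omega
      obtain ⟨p0, hp0⟩ := hTne
      have hgp0 : g p0.1 ≠ 0 :=
        Int.natAbs_pos.mp (lt_of_le_of_lt (Nat.zero_le _) p0.2.isLt)
      have hcntp0 : 0 < cnt p0.1 := by
        apply Finset.card_pos.mpr
        exact ⟨p0, Finset.mem_filter.mpr ⟨hp0, rfl⟩⟩
      have hne : h ≠ 0 := by
        intro hz
        have := congrFun hz p0.1
        rw [hh] at this
        simp only [Pi.zero_apply] at this
        rcases mul_eq_zero.mp this with hs | hc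
        · exact (by simpa [Int.sign_eq_zero_iff_zero] using hs : g p0.1 = 0) |> hgp0
        · have : cnt p0.1 = 0 := by exact_mod_cast hc
          omega
      -- conformality
      have hconf : ∀ i, 0 ≤ h i * g i ∧ |h i| ≤ |g i| := by
        intro i
        constructor
        · rw [hh]
          show 0 ≤ Int.sign (g i) * (cnt i : ℤ) * g i
          rw [show Int.sign (g i) * (cnt i : ℤ) * g i
              = (cnt i : ℤ) * (Int.sign (g i) * g i) by ring,
            GraverAux.sign_mul_self_eq_abs]
          positivity
        · rw [hh]
          show |Int.sign (g i) * (cnt i : ℤ)| ≤ |g i|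
          rw [abs_mul, abs_of_nonneg (by positivity : (0:ℤ) ≤ (cnt i : ℤ))]
          calc |Int.sign (g i)| * (cnt i : ℤ) ≤ 1 * (cnt i : ℤ) := by
                apply mul_le_mul_of_nonneg_right (GraverAux.abs_sign_le_one _) (by positivity)
            _ = (cnt i : ℤ) := one_mul _
            _ ≤ ((g i).natAbs : ℤ) := by exact_mod_cast hcnt_le i
            _ = |g i| := (Int.abs_eq_natAbs _).symm
      have heq := hgmin h hne hker hconf
      -- but h has strictly smaller 1-norm
      have hlt : ∑ i, (h i).natAbs < N := by
        calc ∑ i, (h i).natAbs ≤ ∑ i, cnt i := by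
              apply Finset.sum_le_sum
              intro i _
              rw [hh]
              show (Int.sign (g i) * (cnt i : ℤ)).natAbs ≤ cnt i
              rw [Int.natAbs_mul]
              calc (Int.sign (g i)).natAbs * (cnt i : ℤ).natAbs
                  ≤ 1 * (cnt i : ℤ).natAbs := by
                    apply Nat.mul_le_mul_right
                    rcases lt_trichotomy (g i) 0 with hs|hs|hs <;>
                      simp [Int.sign_eq_one_of_pos, Int.sign_eq_neg_one_of_neg, hs]
                _ = cnt i := by rw [one_mul, Int.natAbs_natCast]
          _ = T.card := hTfib.symm
          _ < N := by omega
      rw [heq] at hlt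
      rw [hN] at hlt
      exact lt_irrefl _ hlt
    -- derive the contradiction via pigeonhole
    obtain ⟨a, b, hab, hfab⟩ := Fintype.exists_ne_map_eq_of_card_lt f
      (by rw [hcardIcc, Fintype.card_fin]; omega)
    rcases lt_or_gt_of_ne (fun hv : (a:ℕ) = (b:ℕ) => hab (Fin.ext hv)) with hlt | hgt
    · exact main a b hlt hfab
    · exact main b a hgt hfab.symm
  have habs : ∑ i, |g i| = (N:ℤ) := by
    rw [hN]
    push_cast
    rfl
  rw [habs]
  have hdΔ : 1 ≤ d * Δ := Nat.one_le_iff_ne_zero.mpr (by positivity)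
  have h2 : 2 * d * Δ + 1 ≤ 3 * d * Δ := by
    have : 2 * d * Δ = 2 * (d * Δ) := by ring
    have h3 : 3 * d * Δ = 3 * (d * Δ) := by ring
    omega
  calc (N:ℤ) ≤ ((2 * d * Δ + 1) ^ d : ℕ) := by exact_mod_cast key
    _ ≤ (((3 * d * Δ : ℕ) : ℤ)) ^ d := by
        rw [show (((3 * d * Δ : ℕ) : ℤ)) ^ d = (((3 * d * Δ) ^ d : ℕ) : ℤ) by push_cast; ring]
        exact_mod_cast Nat.pow_le_pow_left h2 d
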